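/- Let 0 < p ≤ q, λ ∈ [0,1], and f, g ∈ L^p ∩ L^q on ℝ^d. Define H_r(f,g) = sqrt((‖f‖_r^r + ‖g‖_r^r) ‖f-g‖_r^r). Then H_{λp + (1-λ)q}(f, g) ≤ sqrt(λ) H_p(f, g) + sqrt(1-λ) H_q(f, g). -/

import Mathlib

open MeasureTheory
open scoped ENNReal

-- Two-point Hölder inequality
lemma holder2 {lam : ℝ} (h0 : 0 < lam) (h1 : lam < 1) {x y u v : ℝ}
    (hx : 0 ≤ x) (hy : 0 ≤ y) (hu : 0 ≤ u) (hv : 0 ≤ v) :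
    x ^ lam * y ^ (1 - lam) + u ^ lam * v ^ (1 - lam) ≤
      (x + u) ^ lam * (y + v) ^ (1 - lam) := by
  have hpq : Real.HolderConjugate (1 / lam) (1 / (1 - lam)) :=
    Real.holderConjugate_one_div h0 (by linarith) (by ring)
  have key := Real.inner_le_Lp_mul_Lq_of_nonneg (Finset.univ : Finset (Fin 2))
    (f := ![x ^ lam, u ^ lam]) (g := ![y ^ (1 - lam), v ^ (1 - lam)]) hpq
    (fun i _ => by fin_cases i <;> simp <;> positivity)
    (fun i _ => by fin_cases i <;> simp <;> positivity)
  simp only [Fin.sum_univ_two, Matrix.cons_val_zero, Matrix.cons_val_one, Matrix.head_cons] at key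
  have e : ∀ {a b : ℝ}, 0 ≤ a → 0 < b → b < 1 → (a ^ b) ^ (1 / b) = a := by
    intro a b ha hb _
    rw [← Real.rpow_mul ha, mul_one_div, div_self hb.ne', Real.rpow_one]
  rw [e hx h0 h1, e hu h0 h1, e hy (by linarith) (by linarith), e hv (by linarith) (by linarith),
    one_div_one_div, one_div_one_div] at key
  exact key

lemma interp {α : Type*} [MeasurableSpace α] {μ : Measure α} {h : α → ℝ} (hm : Measurable h)
    {p q lam : ℝ} (hp : 0 < p) (hq : 0 < q) (h0 : 0 < lam) (h1 : lam < 1)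
    (hip : Integrable (fun x => |h x| ^ p) μ) (hiq : Integrable (fun x => |h x| ^ q) μ) :
    ∫ x, |h x| ^ (lam * p + (1 - lam) * q) ∂μ ≤
      (∫ x, |h x| ^ p ∂μ) ^ lam * (∫ x, |h x| ^ q ∂μ) ^ (1 - lam) := by
  have h1' : 0 < 1 - lam := by linarith
  have hpq : Real.HolderConjugate (1 / lam) (1 / (1 - lam)) :=
    Real.holderConjugate_one_div h0 (by linarith) (by ring)
  -- Memℒp facts
  have memF : MemLp (fun x => |h x| ^ (lam * p)) (ENNReal.ofReal (1 / lam)) μ := by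
    have m1 : MemLp (fun x => |h x| ^ p) 1 μ := memLp_one_iff_integrable.mpr hip
    have m2 := m1.norm_rpow_div (ENNReal.ofReal lam)
    have hexp : (1 : ℝ≥0∞) / ENNReal.ofReal lam = ENNReal.ofReal (1 / lam) := by
      rw [one_div, one_div, ENNReal.ofReal_inv_of_pos h0]
    rw [hexp] at m2
    convert m2 using 2 with x
    rw [ENNReal.toReal_ofReal h0.le, Real.norm_of_nonneg (Real.rpow_nonneg (abs_nonneg _) _),
      ← Real.rpow_mul (abs_nonneg _), mul_comm]
  have memG : MemLp (fun x => |h x| ^ ((1 - lam) * q)) (ENNReal.ofReal (1 / (1 - lam))) μ := by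
    have m1 : MemLp (fun x => |h x| ^ q) 1 μ := memLp_one_iff_integrable.mpr hiq
    have m2 := m1.norm_rpow_div (ENNReal.ofReal (1 - lam))
    have hexp : (1 : ℝ≥0∞) / ENNReal.ofReal (1 - lam) = ENNReal.ofReal (1 / (1 - lam)) := by
      rw [one_div, one_div, ENNReal.ofReal_inv_of_pos h1']
    rw [hexp] at m2
    convert m2 using 2 with x
    rw [ENNReal.toReal_ofReal h1'.le, Real.norm_of_nonneg (Real.rpow_nonneg (abs_nonneg _) _),
      ← Real.rpow_mul (abs_nonneg _), mul_comm]
  have key := integral_mul_le_Lp_mul_Lq_of_nonneg hpq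
    (Filter.Eventually.of_forall fun x => Real.rpow_nonneg (abs_nonneg _) _)
    (Filter.Eventually.of_forall fun x => Real.rpow_nonneg (abs_nonneg _) _) memF memG
  have e1 : ∀ x, |h x| ^ (lam * p) * |h x| ^ ((1 - lam) * q) =
      |h x| ^ (lam * p + (1 - lam) * q) := by
    intro x
    rw [← Real.rpow_add_of_nonneg (abs_nonneg _) (by positivity) (by positivity)]
  have e2 : ∀ x, (|h x| ^ (lam * p)) ^ (1 / lam) = |h x| ^ p := by
    intro x
    rw [← Real.rpow_mul (abs_nonneg _)]
    congr 1
    field_simp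
  have e3 : ∀ x, (|h x| ^ ((1 - lam) * q)) ^ (1 / (1 - lam)) = |h x| ^ q := by
    intro x
    rw [← Real.rpow_mul (abs_nonneg _)]
    congr 1
    field_simp
  simp only [e1, e2, e3, one_div_one_div] at key
  exact key

lemma integrable_sub_rpow {α : Type*} [MeasurableSpace α] {μ : Measure α} {f g : α → ℝ}
    (hf : Measurable f) (hg : Measurable g) {p : ℝ} (hp : 0 < p)
    (hfp : Integrable (fun x => |f x| ^ p) μ) (hgp : Integrable (fun x => |g x| ^ p) μ) :
    Integrable (fun x => |f x - g x| ^ p) μ := by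
  have hmeas : AEStronglyMeasurable (fun x => |f x - g x| ^ p) μ :=
    (by fun_prop : Measurable fun x => |f x - g x| ^ p).aestronglyMeasurable
  refine Integrable.mono' ((hfp.const_mul (2 ^ p)).add (hgp.const_mul (2 ^ p))) hmeas
    (Filter.Eventually.of_forall fun x => ?_)
  rw [Real.norm_of_nonneg (Real.rpow_nonneg (abs_nonneg _) _)]
  have h1 : |f x - g x| ≤ 2 * max |f x| |g x| := by
    calc |f x - g x| ≤ |f x| + |g x| := abs_sub _ _
    _ ≤ 2 * max |f x| |g x| := by
        rcases le_total (|f x|) (|g x|) with h | h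
        · rw [max_eq_right h]; linarith
        · rw [max_eq_left h]; linarith
  calc |f x - g x| ^ p ≤ (2 * max |f x| |g x|) ^ p :=
        Real.rpow_le_rpow (abs_nonneg _) h1 hp.le
    _ = 2 ^ p * (max |f x| |g x|) ^ p := Real.mul_rpow (by norm_num) (le_max_of_le_left (abs_nonneg _))
    _ ≤ 2 ^ p * |f x| ^ p + 2 ^ p * |g x| ^ p := by
        rcases le_total (|f x|) (|g x|) with h | h
        · rw [max_eq_right h]
          have : (0:ℝ) ≤ 2 ^ p * |f x| ^ p := by positivity
          linarith
        · rw [max_eq_left h]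
          have : (0:ℝ) ≤ 2 ^ p * |g x| ^ p := by positivity
          linarith

set_option maxHeartbeats 1000000 in
theorem stmt4 (d : ℕ) (p q lam : ℝ) (hp : 0 < p) (hpq : p ≤ q)
    (hl0 : 0 ≤ lam) (hl1 : lam ≤ 1)
    (f g : EuclideanSpace ℝ (Fin d) → ℝ)
    (hf : Measurable f) (hg : Measurable g)
    (hfp : Integrable (fun r => |f r| ^ p)) (hfq : Integrable (fun r => |f r| ^ q))
    (hgp : Integrable (fun r => |g r| ^ p)) (hgq : Integrable (fun r => |g r| ^ q)) :
    Real.sqrt (((∫ r, |f r| ^ (lam * p + (1 - lam) * q)) +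
          ∫ r, |g r| ^ (lam * p + (1 - lam) * q)) *
        ∫ r, |f r - g r| ^ (lam * p + (1 - lam) * q)) ≤
      Real.sqrt lam *
          Real.sqrt (((∫ r, |f r| ^ p) + ∫ r, |g r| ^ p) * ∫ r, |f r - g r| ^ p) +
        Real.sqrt (1 - lam) *
          Real.sqrt (((∫ r, |f r| ^ q) + ∫ r, |g r| ^ q) * ∫ r, |f r - g r| ^ q) := by
  have hq0 : 0 < q := lt_of_lt_of_le hp hpq
  rcases eq_or_lt_of_le hl0 with h0 | h0
  · subst h0
    norm_num
  rcases eq_or_lt_of_le hl1 with h1 | h1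
  · subst h1
    norm_num
  -- main case 0 < lam < 1
  have hfgp : Integrable (fun x => |f x - g x| ^ p) := integrable_sub_rpow hf hg hp hfp hgp
  have hfgq : Integrable (fun x => |f x - g x| ^ q) := integrable_sub_rpow hf hg hq0 hfq hgq
  set Af := ∫ r, |f r| ^ p with hAf
  set Ag := ∫ r, |g r| ^ p with hAg
  set Bf := ∫ r, |f r| ^ q with hBf
  set Bg := ∫ r, |g r| ^ q with hBg
  set C := ∫ r, |f r - g r| ^ p with hC
  set D := ∫ r, |f r - g r| ^ q with hD
  have nAf : 0 ≤ Af := integral_nonneg fun x => Real.rpow_nonneg (abs_nonneg _) _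
  have nAg : 0 ≤ Ag := integral_nonneg fun x => Real.rpow_nonneg (abs_nonneg _) _
  have nBf : 0 ≤ Bf := integral_nonneg fun x => Real.rpow_nonneg (abs_nonneg _) _
  have nBg : 0 ≤ Bg := integral_nonneg fun x => Real.rpow_nonneg (abs_nonneg _) _
  have nC : 0 ≤ C := integral_nonneg fun x => Real.rpow_nonneg (abs_nonneg _) _
  have nD : 0 ≤ D := integral_nonneg fun x => Real.rpow_nonneg (abs_nonneg _) _
  have Sf := interp hf hp hq0 h0 h1 hfp hfq
  have Sg := interp hg hp hq0 h0 h1 hgp hgq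
  have T := interp (hf.sub hg) hp hq0 h0 h1 hfgp hfgq
  have hS : (∫ r, |f r| ^ (lam * p + (1 - lam) * q)) + (∫ r, |g r| ^ (lam * p + (1 - lam) * q)) ≤
      (Af + Ag) ^ lam * (Bf + Bg) ^ (1 - lam) :=
    (add_le_add Sf Sg).trans (holder2 h0 h1 nAf nBf nAg nBg)
  have nS : 0 ≤ (∫ r, |f r| ^ (lam * p + (1 - lam) * q)) +
      (∫ r, |g r| ^ (lam * p + (1 - lam) * q)) :=
    add_nonneg (integral_nonneg fun x => Real.rpow_nonneg (abs_nonneg _) _)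
      (integral_nonneg fun x => Real.rpow_nonneg (abs_nonneg _) _)
  have nT : 0 ≤ ∫ r, |f r - g r| ^ (lam * p + (1 - lam) * q) :=
    integral_nonneg fun x => Real.rpow_nonneg (abs_nonneg _) _
  have hprod : ((∫ r, |f r| ^ (lam * p + (1 - lam) * q)) +
      (∫ r, |g r| ^ (lam * p + (1 - lam) * q))) * (∫ r, |f r - g r| ^ (lam * p + (1 - lam) * q)) ≤
      ((Af + Ag) * C) ^ lam * ((Bf + Bg) * D) ^ (1 - lam) := by
    calc _ ≤ ((Af + Ag) ^ lam * (Bf + Bg) ^ (1 - lam)) * (C ^ lam * D ^ (1 - lam)) :=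
          mul_le_mul hS T nT (by positivity)
      _ = ((Af + Ag) * C) ^ lam * ((Bf + Bg) * D) ^ (1 - lam) := by
          rw [Real.mul_rpow (by positivity) nC, Real.mul_rpow (by positivity) nD]; ring
  calc Real.sqrt _ ≤ Real.sqrt (((Af + Ag) * C) ^ lam * ((Bf + Bg) * D) ^ (1 - lam)) :=
        Real.sqrt_le_sqrt hprod
    _ = (Real.sqrt ((Af + Ag) * C)) ^ lam * (Real.sqrt ((Bf + Bg) * D)) ^ (1 - lam) := by
        rw [Real.sqrt_eq_rpow, Real.sqrt_eq_rpow, Real.sqrt_eq_rpow,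
          Real.mul_rpow (by positivity) (by positivity),
          ← Real.rpow_mul (by positivity), ← Real.rpow_mul (by positivity),
          ← Real.rpow_mul (by positivity), ← Real.rpow_mul (by positivity)]
        ring_nf
    _ ≤ lam * Real.sqrt ((Af + Ag) * C) + (1 - lam) * Real.sqrt ((Bf + Bg) * D) :=
        Real.geom_mean_le_arith_mean2_weighted h0.le (by linarith) (Real.sqrt_nonneg _)
          (Real.sqrt_nonneg _) (by ring)
    _ ≤ Real.sqrt lam * Real.sqrt ((Af + Ag) * C) +
        Real.sqrt (1 - lam) * Real.sqrt ((Bf + Bg) * D) := by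
        have e1 : lam ≤ Real.sqrt lam := by
          nlinarith [Real.sq_sqrt h0.le, Real.sqrt_nonneg lam,
            Real.sqrt_le_sqrt hl1, Real.sqrt_one]
        have e2 : 1 - lam ≤ Real.sqrt (1 - lam) := by
          nlinarith [Real.sq_sqrt (by linarith : (0:ℝ) ≤ 1 - lam), Real.sqrt_nonneg (1 - lam),
            Real.sqrt_le_sqrt (by linarith : 1 - lam ≤ 1), Real.sqrt_one]
        exact add_le_add (mul_le_mul_of_nonneg_right e1 (Real.sqrt_nonneg _))
          (mul_le_mul_of_nonneg_right e2 (Real.sqrt_nonneg _))
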